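/- Let k < n be positive integers, and let D be a directed graph on n vertices such that for every ordered pair of disjoint vertex subsets S, T with |S| = |T| = k, there is a directed edge from some vertex of S to some vertex of T. Then D contains a directed path of length at least n − 2k + 1. -/

import Mathlib

theorem stmt_3 {V : Type*} [Fintype V] [DecidableEq V] (D : V → V → Prop)
    (n k : ℕ) (hn : Fintype.card V = n) (hk : 0 < k) (hkn : k < n)
    (hcross : ∀ S T : Finset V, Disjoint S T → S.card = k → T.card = k →
      ∃ s ∈ S, ∃ t ∈ T, D s t) :
    -- a directed path of length (in edges) at least n - 2k + 1,
    -- i.e. a list of at least n - 2k + 2 distinct vertices with consecutive directed edges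
    ∃ l : List V, l.Nodup ∧ l.Chain' D ∧ n + 2 ≤ l.length + 2 * k := by
  classical
  suffices H : ∀ μ : ℕ, ∀ (B : Finset V) (W : List V),
      W.Nodup → W.Chain' D → (∀ x ∈ W, x ∉ B) → B.card ≤ k - 1 →
      (∀ y ∈ Finset.univ \ (B ∪ W.toFinset), ∀ b ∈ B, ¬ D y b) →
      (k - 1 - B.card) * (n + 1) + (Finset.univ \ (B ∪ W.toFinset)).card ≤ μ →
      ∃ l : List V, l.Nodup ∧ l.Chain' D ∧ n + 2 ≤ l.length + 2 * k by
    refine H ((k - 1) * (n + 1) + n) ∅ [] (by simp) List.isChain_nil (by simp) (by simp)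
      (by simp) ?_
    simp [hn]
  intro μ
  induction μ using Nat.strong_induction_on with
  | _ μ IH =>
    intro B W hnd hch hWB hBcard hedge hμ
    cases W with
    | nil =>
      by_cases hYe : (Finset.univ \ (B ∪ (List.nil : List V).toFinset)).Nonempty
      · obtain ⟨y, hy⟩ := hYe
        simp only [List.toFinset_nil, Finset.union_empty, Finset.mem_sdiff,
          Finset.mem_univ, true_and] at hy
        -- recurse with W = [y]
        have hsub : Finset.univ \ (B ∪ ([y] : List V).toFinset) ⊆
            Finset.univ \ (B ∪ ([] : List V).toFinset) := by
          intro x hx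
          simp only [Finset.mem_sdiff, Finset.mem_univ, true_and, Finset.mem_union,
            List.toFinset_cons, List.toFinset_nil] at hx ⊢
          tauto
        have hylt : (Finset.univ \ (B ∪ ([y] : List V).toFinset)).card <
            (Finset.univ \ (B ∪ ([] : List V).toFinset)).card := by
          apply Finset.card_lt_card
          constructor
          · exact hsub
          · intro hcon
            have := hcon (by simp [hy] : y ∈ Finset.univ \ (B ∪ ([] : List V).toFinset))
            simp at this
        refine IH ((k - 1 - B.card) * (n + 1) +
            (Finset.univ \ (B ∪ ([y] : List V).toFinset)).card) ?_ B [y]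
          (by simp) (List.isChain_singleton _) (by simpa using hy) hBcard ?_ le_rfl
        · exact lt_of_lt_of_le (Nat.add_lt_add_left hylt _) hμ
        · intro z hz b hb
          exact hedge z (hsub hz) b hb
      · -- Y empty: contradiction with k < n
        exfalso
        rw [Finset.not_nonempty_iff_eq_empty, Finset.sdiff_eq_empty_iff_subset] at hYe
        have := Finset.card_le_card hYe
        simp [hn] at this
        omega
    | cons h w =>
      by_cases hprep : ∃ y ∈ Finset.univ \ (B ∪ (h :: w).toFinset), D y h
      · -- prepend y
        obtain ⟨y, hyY, hyD⟩ := hprep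
        simp only [Finset.mem_sdiff, Finset.mem_univ, true_and, Finset.mem_union,
          List.mem_toFinset, not_or] at hyY
        obtain ⟨hyB, hyW⟩ := hyY
        have hsub : Finset.univ \ (B ∪ (y :: h :: w).toFinset) ⊆
            Finset.univ \ (B ∪ (h :: w).toFinset) := by
          intro x hx
          simp only [Finset.mem_sdiff, Finset.mem_univ, true_and, Finset.mem_union,
            List.toFinset_cons, Finset.mem_insert, List.mem_toFinset, not_or] at hx ⊢
          tauto
        have hylt : (Finset.univ \ (B ∪ (y :: h :: w).toFinset)).card <
            (Finset.univ \ (B ∪ (h :: w).toFinset)).card := by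
          apply Finset.card_lt_card
          constructor
          · exact hsub
          · intro hcon
            have hyin : y ∈ Finset.univ \ (B ∪ (h :: w).toFinset) := by
              simp only [Finset.mem_sdiff, Finset.mem_univ, true_and, Finset.mem_union,
                List.mem_toFinset, not_or]
              exact ⟨hyB, hyW⟩
            have := hcon hyin
            simp at this
        refine IH ((k - 1 - B.card) * (n + 1) +
            (Finset.univ \ (B ∪ (y :: h :: w).toFinset)).card) ?_ B (y :: h :: w)
          ?_ ?_ ?_ hBcard ?_ le_rfl
        · exact lt_of_lt_of_le (Nat.add_lt_add_left hylt _) hμ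
        · exact List.nodup_cons.mpr ⟨hyW, hnd⟩
        · exact List.isChain_cons_cons.mpr ⟨hyD, hch⟩
        · intro x hx
          rcases List.mem_cons.mp hx with rfl | hx'
          · exact hyB
          · exact hWB x hx'
        · intro z hz b hb
          exact hedge z (hsub hz) b hb
      · push_neg at hprep
        have hhB : h ∉ B := hWB h (by simp)
        by_cases hBk : B.card = k - 1
        · -- stop: show Y small and return h :: w
          have hYk : (Finset.univ \ (B ∪ (h :: w).toFinset)).card ≤ k - 1 := by
            by_contra hcon
            push_neg at hcon
            have hkle : k ≤ (Finset.univ \ (B ∪ (h :: w).toFinset)).card := by omega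
            obtain ⟨S, hS, hScard⟩ :=
              Finset.exists_subset_card_eq hkle
            have hTcard : (insert h B).card = k := by
              rw [Finset.card_insert_of_notMem hhB, hBk]
              omega
            have hdisj : Disjoint S (insert h B) := by
              rw [Finset.disjoint_left]
              intro s hs hsT
              have hsY := hS hs
              simp only [Finset.mem_sdiff, Finset.mem_univ, true_and, Finset.mem_union,
                List.mem_toFinset, not_or] at hsY
              rcases Finset.mem_insert.mp hsT with rfl | hsB
              · exact hsY.2 (by simp)
              · exact hsY.1 hsB
            obtain ⟨s, hs, t, ht, hst⟩ := hcross S (insert h B) hdisj hScard hTcard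
            rcases Finset.mem_insert.mp ht with rfl | htB
            · exact hprep s (hS hs) hst
            · exact hedge s (hS hs) t htB hst
          refine ⟨h :: w, hnd, hch, ?_⟩
          -- cardinality count
          have hdisjBW : Disjoint B (h :: w).toFinset := by
            rw [Finset.disjoint_right]
            intro x hx
            exact hWB x (List.mem_toFinset.mp hx)
          have hcardU : (B ∪ (h :: w).toFinset).card = B.card + (h :: w).length := by
            rw [Finset.card_union_of_disjoint hdisjBW, List.toFinset_card_of_nodup hnd]
          have hsubU : B ∪ (h :: w).toFinset ⊆ Finset.univ := Finset.subset_univ _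
          have hYcard : (Finset.univ \ (B ∪ (h :: w).toFinset)).card =
              n - (B.card + (h :: w).length) := by
            rw [Finset.card_sdiff_of_subset hsubU, Finset.card_univ, hn, hcardU]
          have hle : B.card + (h :: w).length ≤ n := by
            calc B.card + (h :: w).length = (B ∪ (h :: w).toFinset).card := hcardU.symm
            _ ≤ Finset.univ.card := Finset.card_le_card hsubU
            _ = n := by rw [Finset.card_univ, hn]
          omega
        · -- move head into B
          have hBlt : B.card < k - 1 := lt_of_le_of_ne hBcard hBk
          have hYeq : Finset.univ \ (insert h B ∪ w.toFinset) =
              Finset.univ \ (B ∪ (h :: w).toFinset) := by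
            ext x
            simp only [Finset.mem_sdiff, Finset.mem_univ, true_and, Finset.mem_union,
              Finset.mem_insert, List.toFinset_cons, List.mem_toFinset, not_or]
            tauto
          have hnw : w.Nodup := (List.nodup_cons.mp hnd).2
          have hhw : h ∉ w := (List.nodup_cons.mp hnd).1
          have hmeas : (k - 1 - (insert h B).card) * (n + 1) +
              (Finset.univ \ (insert h B ∪ w.toFinset)).card <
              (k - 1 - B.card) * (n + 1) +
              (Finset.univ \ (B ∪ (h :: w).toFinset)).card := by
            rw [hYeq, Finset.card_insert_of_notMem hhB]
            have h1 : k - 1 - (B.card + 1) + 1 = k - 1 - B.card := by omega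
            have h2 : (k - 1 - B.card) * (n + 1) =
                (k - 1 - (B.card + 1)) * (n + 1) + (n + 1) := by
              rw [← h1, Nat.succ_mul]
            omega
          refine IH ((k - 1 - (insert h B).card) * (n + 1) +
              (Finset.univ \ (insert h B ∪ w.toFinset)).card) ?_ (insert h B) w
            hnw ?_ ?_ ?_ ?_ le_rfl
          · exact lt_of_lt_of_le hmeas hμ
          · exact (List.isChain_cons.mp hch).2
          · intro x hx
            rw [Finset.mem_insert]
            push_neg
            exact ⟨fun hxh => hhw (hxh ▸ hx), hWB x (List.mem_cons_of_mem _ hx)⟩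
          · rw [Finset.card_insert_of_notMem hhB]
            omega
          · intro y hy b hb
            rcases Finset.mem_insert.mp hb with rfl | hbB
            · exact hprep y (hYeq ▸ hy)
            · exact hedge y (hYeq ▸ hy) b hbB
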